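/- Let a : ℝ → ℝ be smooth and let F : ℝ → ℝ be three times differentiable with F‴ = a. Then for every natural number p ≥ 1 and every x ∈ ℝ, ∑_{i=1}^{2p−2} i · a^{(i−1)}(x) · C(2p, i+2) · a^{(2p−2−i)}(x) = 2p · (a·F′)^{(2p−1)}(x) − 2 · (a·F)^{(2p)}(x) + 2 · F(x) · a^{(2p)}(x) + 2p · F′(x) · a^{(2p−1)}(x). -/

import Mathlib

lemma hasDerivAt_iteratedDeriv (f : ℝ → ℝ) (hf : ContDiff ℝ (⊤ : ℕ∞) f) (k : ℕ) (x : ℝ) :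
    HasDerivAt (iteratedDeriv k f) (iteratedDeriv (k+1) f x) x := by
  have h1 : Differentiable ℝ (iteratedDeriv k f) := by
    rw [iteratedDeriv_eq_iterate]
    exact (hf.iterate_deriv k).differentiable (by simp)
  rw [iteratedDeriv_succ]
  exact (h1 x).hasDerivAt

lemma pascal_sum (n : ℕ) (u v : ℕ → ℝ) :
    ∑ k ∈ Finset.range (n+2), ((n+1).choose k : ℝ) * u k * v (n+1-k)
      = ∑ k ∈ Finset.range (n+1), (n.choose k : ℝ) * (u (k+1) * v (n-k) + u k * v (n+1-k)) := by
  rw [Finset.sum_range_succ' (fun k => ((n+1).choose k : ℝ) * u k * v (n+1-k)) (n+1)]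
  have h1 : ∀ k ∈ Finset.range (n+1),
      ((n+1).choose (k+1) : ℝ) * u (k+1) * v (n+1-(k+1))
        = (n.choose k : ℝ) * u (k+1) * v (n-k) + (n.choose (k+1) : ℝ) * u (k+1) * v (n-k) := by
    intro k hk
    have : n+1-(k+1) = n-k := by omega
    rw [this, Nat.choose_succ_succ]
    push_cast; ring
  rw [Finset.sum_congr rfl h1, Finset.sum_add_distrib]
  have h2 : ∑ k ∈ Finset.range (n+1), (n.choose (k+1) : ℝ) * u (k+1) * v (n-k)
      + ((n+1).choose 0 : ℝ) * u 0 * v (n+1-0)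
      = ∑ k ∈ Finset.range (n+1), (n.choose k : ℝ) * u k * v (n+1-k) := by
    have h3 : ∀ k ∈ Finset.range (n+1), (n.choose (k+1) : ℝ) * u (k+1) * v (n-k)
        = (n.choose (k+1) : ℝ) * u (k+1) * v (n+1-(k+1)) := by
      intro k hk; congr 2; omega
    rw [Finset.sum_congr rfl h3]
    have := (Finset.sum_range_succ' (fun k => (n.choose k : ℝ) * u k * v (n+1-k)) (n+1)).symm
    simp only [Nat.choose_zero_right, Nat.cast_one, one_mul, Nat.sub_zero] at this ⊢
    rw [this, Finset.sum_range_succ]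
    simp [Nat.choose_succ_self]
  rw [add_assoc, h2]
  rw [← Finset.sum_add_distrib]
  apply Finset.sum_congr rfl
  intro k hk; ring

lemma leibniz_iteratedDeriv (f g : ℝ → ℝ) (hf : ContDiff ℝ (⊤ : ℕ∞) f)
    (hg : ContDiff ℝ (⊤ : ℕ∞) g) (n : ℕ) (x : ℝ) :
    iteratedDeriv n (fun t => f t * g t) x
      = ∑ k ∈ Finset.range (n+1), (n.choose k : ℝ) * iteratedDeriv k f x * iteratedDeriv (n-k) g x := by
  induction n generalizing x with
  | zero => simp [iteratedDeriv_zero]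
  | succ n ih =>
    have hfun : iteratedDeriv n (fun t => f t * g t)
        = fun y => ∑ k ∈ Finset.range (n+1), (n.choose k : ℝ) * iteratedDeriv k f y * iteratedDeriv (n-k) g y :=
      funext fun y => ih y
    rw [iteratedDeriv_succ, hfun]
    have hd : HasDerivAt
        (fun y => ∑ k ∈ Finset.range (n+1), (n.choose k : ℝ) * iteratedDeriv k f y * iteratedDeriv (n-k) g y)
        (∑ k ∈ Finset.range (n+1), (n.choose k : ℝ) *
          (iteratedDeriv (k+1) f x * iteratedDeriv (n-k) g x
            + iteratedDeriv k f x * iteratedDeriv (n-k+1) g x)) x := by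
      apply HasDerivAt.fun_sum
      intro k hk
      have h1 := (hasDerivAt_iteratedDeriv f hf k x).const_mul ((n.choose k : ℝ))
      have h2 := hasDerivAt_iteratedDeriv g hg (n-k) x
      have := (h1.mul h2 : HasDerivAt (fun y => (n.choose k : ℝ) * iteratedDeriv k f y * iteratedDeriv (n-k) g y) _ x)
      refine this.congr_deriv ?_
      ring
    rw [hd.deriv]
    have heq : ∀ k ∈ Finset.range (n+1), (n.choose k : ℝ) *
          (iteratedDeriv (k+1) f x * iteratedDeriv (n-k) g x
            + iteratedDeriv k f x * iteratedDeriv (n-k+1) g x)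
        = (n.choose k : ℝ) *
          (iteratedDeriv (k+1) f x * iteratedDeriv (n-k) g x
            + iteratedDeriv k f x * iteratedDeriv (n+1-k) g x) := by
      intro k hk
      simp only [Finset.mem_range] at hk
      have : n - k + 1 = n + 1 - k := by omega
      rw [this]
    rw [Finset.sum_congr rfl heq, ← pascal_sum n (fun k => iteratedDeriv k f x) (fun k => iteratedDeriv k g x)]

/-- Let `a : ℝ → ℝ` be smooth and `F` three times differentiable with `F‴ = a`.  Then for
`p ≥ 1`,
`∑_{i=1}^{2p−2} i·a⁽ⁱ⁻¹⁾(x)·C(2p, i+2)·a⁽²ᵖ⁻²⁻ⁱ⁾(x)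
  = 2p·(a·F′)⁽²ᵖ⁻¹⁾(x) − 2·(a·F)⁽²ᵖ⁾(x) + 2·F(x)·a⁽²ᵖ⁾(x) + 2p·F′(x)·a⁽²ᵖ⁻¹⁾(x)`. -/
theorem statement14 (a : ℝ → ℝ) (ha : ContDiff ℝ (⊤ : ℕ∞) a)
    (F : ℝ → ℝ) (hF : Differentiable ℝ F) (hF' : Differentiable ℝ (deriv F))
    (hF'' : Differentiable ℝ (deriv (deriv F)))
    (hF3 : ∀ x : ℝ, iteratedDeriv 3 F x = a x)
    (p : ℕ) (hp : 1 ≤ p) (x : ℝ) :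
    ∑ i ∈ Finset.Icc 1 (2 * p - 2),
        (i : ℝ) * iteratedDeriv (i - 1) a x * (((2 * p).choose (i + 2)) : ℝ)
          * iteratedDeriv (2 * p - 2 - i) a x
      = 2 * (p : ℝ) * iteratedDeriv (2 * p - 1) (fun t => a t * deriv F t) x
        - 2 * iteratedDeriv (2 * p) (fun t => a t * F t) x
        + 2 * F x * iteratedDeriv (2 * p) a x
        + 2 * (p : ℝ) * deriv F x * iteratedDeriv (2 * p - 1) a x := by
  -- F''' = a as functions
  have haF : deriv (deriv (deriv F)) = a := by
    funext y
    have h := hF3 y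
    rw [show (3:ℕ) = 2+1 from rfl, iteratedDeriv_succ,
        show (2:ℕ) = 1+1 from rfl, iteratedDeriv_succ, iteratedDeriv_one] at h
    exact h
  -- F is smooth
  have hFsm : ContDiff ℝ (⊤ : ℕ∞) F := by
    rw [show ((⊤:ℕ∞) : WithTop ℕ∞) = (⊤:ℕ∞) from rfl] at *
    rw [contDiff_infty_iff_deriv]
    refine ⟨hF, ?_⟩
    rw [contDiff_infty_iff_deriv]
    refine ⟨hF', ?_⟩
    rw [contDiff_infty_iff_deriv]
    exact ⟨hF'', haF ▸ ha⟩
  have hdF : ContDiff ℝ (⊤ : ℕ∞) (deriv F) := (contDiff_infty_iff_deriv.mp hFsm).2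
  -- higher derivatives of F are derivatives of a
  have hFk3 : ∀ k : ℕ, iteratedDeriv (k+3) F = iteratedDeriv k a := by
    intro k
    have h3 : iteratedDeriv 3 F = a := funext hF3
    rw [iteratedDeriv_eq_iterate, iteratedDeriv_eq_iterate, ← h3, iteratedDeriv_eq_iterate]
    exact Function.iterate_add_apply deriv k 3 F
  obtain ⟨m, hm⟩ : ∃ m, 2*p = m+2 := ⟨2*p-2, by omega⟩
  have h1 : (2*p-1 : ℕ) = m+1 := by omega
  have h2 : (2*p-2 : ℕ) = m := by omega
  have h3 : 2*(p:ℝ) = (m:ℝ)+2 := by exact_mod_cast congrArg (fun k : ℕ => (k:ℝ)) hm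
  simp only [h1, h2, hm, h3, show m+2-1 = m+1 by omega, show m+2-2 = m by omega]
  -- Leibniz expansions
  have hE1 : iteratedDeriv (m+1) (fun t => a t * deriv F t) x
      = ∑ k ∈ Finset.range (m+1+1), ((m+1).choose k : ℝ) * iteratedDeriv k a x
          * iteratedDeriv (m+2-k) F x := by
    rw [leibniz_iteratedDeriv a (deriv F) ha hdF (m+1) x]
    apply Finset.sum_congr rfl
    intro k hk
    simp only [Finset.mem_range] at hk
    congr 1
    rw [show m+2-k = (m+1-k)+1 by omega, iteratedDeriv_succ']
  have hE2 : iteratedDeriv (m+2) (fun t => a t * F t) x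
      = ∑ k ∈ Finset.range (m+2+1), ((m+2).choose k : ℝ) * iteratedDeriv k a x
          * iteratedDeriv (m+2-k) F x :=
    leibniz_iteratedDeriv a F ha hFsm (m+2) x
  -- combine
  have hT1 : ((m:ℝ)+2) * iteratedDeriv (m+1) (fun t => a t * deriv F t) x
      = ∑ k ∈ Finset.range (m+2+1), ((m+2-k : ℕ) : ℝ) * ((m+2).choose k : ℝ)
          * iteratedDeriv k a x * iteratedDeriv (m+2-k) F x := by
    rw [hE1, Finset.mul_sum]
    rw [Finset.sum_range_succ (fun k => ((m+2-k : ℕ) : ℝ) * ((m+2).choose k : ℝ)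
      * iteratedDeriv k a x * iteratedDeriv (m+2-k) F x) (m+2)]
    simp only [Nat.sub_self, Nat.cast_zero, zero_mul, add_zero]
    apply Finset.sum_congr (by rw [show m+1+1 = m+2 by omega])
    intro k hk
    simp only [Finset.mem_range] at hk
    have hc : ((m+1).choose k) * (m+2) = ((m+2).choose k) * (m+2-k) := by
      have h := Nat.choose_mul_succ_eq (m+1) k
      rw [show m+1+1 = m+2 by omega] at h
      omega
    have hc' : ((m:ℝ)+2) * ((m+1).choose k : ℝ) = ((m+2-k:ℕ) : ℝ) * ((m+2).choose k : ℝ) := by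
      rw [show ((m:ℝ)+2) = ((m+2:ℕ):ℝ) by push_cast; ring, mul_comm, ← Nat.cast_mul, hc,
        Nat.cast_mul, mul_comm]
    calc ((m:ℝ)+2) * (((m+1).choose k : ℝ) * iteratedDeriv k a x * iteratedDeriv (m+2-k) F x)
        = (((m:ℝ)+2) * ((m+1).choose k : ℝ)) * iteratedDeriv k a x * iteratedDeriv (m+2-k) F x := by ring
      _ = ((m+2-k : ℕ) : ℝ) * ((m+2).choose k : ℝ) * iteratedDeriv k a x * iteratedDeriv (m+2-k) F x := by
          rw [hc']
  rw [hT1, hE2]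
  -- fold RHS into one sum plus the extra two terms, then peel top two terms
  rw [Finset.mul_sum, ← Finset.sum_sub_distrib]
  have hpeel : ∑ k ∈ Finset.range (m+2+1),
      (((m+2-k : ℕ) : ℝ) * ((m+2).choose k : ℝ) * iteratedDeriv k a x * iteratedDeriv (m+2-k) F x
        - 2 * (((m+2).choose k : ℝ) * iteratedDeriv k a x * iteratedDeriv (m+2-k) F x))
      = (∑ k ∈ Finset.range (m+1),
          (((m+2-k : ℕ) : ℝ) - 2) * ((m+2).choose k : ℝ) * iteratedDeriv k a x
            * iteratedDeriv (m+2-k) F x)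
        - 2 * F x * iteratedDeriv (m+2) a x - ((m:ℝ)+2) * deriv F x * iteratedDeriv (m+1) a x := by
    rw [Finset.sum_range_succ, Finset.sum_range_succ]
    have e1 : m+2-(m+1) = 1 := by omega
    have e2 : m+2-(m+2) = 0 := by omega
    rw [e1, e2]
    simp only [Nat.choose_self, Nat.choose_succ_self_right, iteratedDeriv_zero, iteratedDeriv_one,
      Nat.cast_one, Nat.cast_zero, one_mul]
    push_cast
    have : ∀ k ∈ Finset.range (m+1),
        (((m+2-k : ℕ) : ℝ) * ((m+2).choose k : ℝ) * iteratedDeriv k a x * iteratedDeriv (m+2-k) F x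
          - 2 * (((m+2).choose k : ℝ) * iteratedDeriv k a x * iteratedDeriv (m+2-k) F x))
        = (((m+2-k : ℕ) : ℝ) - 2) * ((m+2).choose k : ℝ) * iteratedDeriv k a x
            * iteratedDeriv (m+2-k) F x := by
      intro k hk; ring
    rw [Finset.sum_congr rfl this]
    ring
  rw [hpeel]
  -- reflect the remaining sum
  have hrefl : ∑ k ∈ Finset.range (m+1),
      (((m+2-k : ℕ) : ℝ) - 2) * ((m+2).choose k : ℝ) * iteratedDeriv k a x
        * iteratedDeriv (m+2-k) F x
      = ∑ i ∈ Finset.range (m+1),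
          (i : ℝ) * ((m+2).choose (i+2) : ℝ) * iteratedDeriv (m-i) a x
            * iteratedDeriv (i+2) F x := by
    rw [← Finset.sum_range_reflect]
    apply Finset.sum_congr rfl
    intro i hi
    simp only [Finset.mem_range] at hi
    have e1 : m+1-1-i = m-i := by omega
    have e2 : m+2-(m-i) = i+2 := by omega
    have e3 : (m+2).choose (m-i) = (m+2).choose (i+2) := by
      rw [show m-i = (m+2)-(i+2) by omega, Nat.choose_symm (by omega)]
    rw [e1, e2, e3]
    have e4 : ((i+2 : ℕ) : ℝ) - 2 = (i : ℝ) := by push_cast; ring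
    rw [e4]
  rw [hrefl]
  -- drop the i = 0 term and identify with the LHS over Icc 1 m
  rw [Finset.range_eq_Ico, Finset.sum_eq_sum_Ico_succ_bot (by omega : 0 < m+1), Finset.Ico_add_one_right_eq_Icc]
  norm_num
  have hterm : ∀ i ∈ Finset.Icc 1 m,
      (i : ℝ) * ((m+2).choose (i+2) : ℝ) * iteratedDeriv (m-i) a x * iteratedDeriv (i+2) F x
      = (i : ℝ) * iteratedDeriv (i-1) a x * ((m+2).choose (i+2) : ℝ) * iteratedDeriv (m-i) a x := by
    intro i hi
    simp only [Finset.mem_Icc] at hi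
    have : iteratedDeriv (i+2) F x = iteratedDeriv (i-1) a x := by
      rw [show i+2 = (i-1)+3 by omega, hFk3 (i-1)]
    rw [this]; ring
  rw [Finset.sum_congr rfl hterm]
  ring
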